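/- arXiv:1712.03518 — 3 statements merged into one kernel-verified Lean document; each statement's English description precedes it below -/
import Mathlib

section
/- Let X and Y be independent nonnegative random variables and let R₁ ≥ R₂ > 0 be constants such that P(X > u) ≤ R₁/u and P(Y > u) ≤ R₂/u for all u > 0. Then E[min{X,Y}] ≤ R₂·(2 + ln(R₁/R₂)). -/
open MeasureTheory

theorem min_expectation_bound
    {Ω : Type*} [MeasurableSpace Ω] (μ : Measure Ω) [IsProbabilityMeasure μ]
    (X Y : Ω → ℝ) (hX : Measurable X) (hY : Measurable Y)
    (hXnn : ∀ ω, 0 ≤ X ω) (hYnn : ∀ ω, 0 ≤ Y ω)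
    (hindep : ProbabilityTheory.IndepFun X Y μ)
    (hint : Integrable (fun ω => min (X ω) (Y ω)) μ)
    (R₁ R₂ : ℝ) (hR₂ : 0 < R₂) (hR : R₂ ≤ R₁)
    (hX' : ∀ u : ℝ, 0 < u → (μ {ω | u < X ω}).toReal ≤ R₁ / u)
    (hY' : ∀ u : ℝ, 0 < u → (μ {ω | u < Y ω}).toReal ≤ R₂ / u) :
    ∫ ω, min (X ω) (Y ω) ∂μ ≤ R₂ * (2 + Real.log (R₁ / R₂)) := by
  have hR₁ : (0:ℝ) < R₁ := lt_of_lt_of_le hR₂ hR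
  have hnn : 0 ≤ᵐ[μ] fun ω => min (X ω) (Y ω) :=
    Filter.Eventually.of_forall fun ω => le_min (hXnn ω) (hYnn ω)
  rw [hint.integral_eq_integral_meas_lt hnn]
  -- the bounding function
  set h : ℝ → ℝ := fun t => if t ≤ R₂ then 1 else if t ≤ R₁ then R₂ / t else R₁ * R₂ / t ^ 2
    with hh
  -- product formula from independence
  have hprod : ∀ t : ℝ, μ {a | t < min (X a) (Y a)} = μ {ω | t < X ω} * μ {ω | t < Y ω} := by
    intro t
    have := hindep.measure_inter_preimage_eq_mul (Set.Ioi t) (Set.Ioi t)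
      measurableSet_Ioi measurableSet_Ioi
    have hset : {a | t < min (X a) (Y a)} = X ⁻¹' Set.Ioi t ∩ Y ⁻¹' Set.Ioi t := by
      ext a; simp [lt_min_iff, Set.mem_Ioi, and_comm]
    rw [hset, this]; rfl
  -- integrability of h on pieces
  have hint1 : IntegrableOn h (Set.Ioc 0 R₂) := by
    apply (integrableOn_const (C := (1:ℝ)) measure_Ioc_lt_top.ne).congr_fun
      (f := fun _ => (1:ℝ)) ?_ measurableSet_Ioc
    intro x hx; simp [hh, hx.2]
  have hint2 : IntegrableOn h (Set.Ioc R₂ R₁) := by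
    have hc : ContinuousOn (fun t : ℝ => R₂ / t) (Set.Icc R₂ R₁) :=
      ContinuousOn.div continuousOn_const continuousOn_id
        (fun x hx => (lt_of_lt_of_le hR₂ hx.1).ne')
    apply (hc.integrableOn_Icc.mono_set Set.Ioc_subset_Icc_self).congr_fun ?_ measurableSet_Ioc
    intro x hx; simp [hh, not_le.2 hx.1, hx.2]
  have heq3 : ∀ x ∈ Set.Ioi R₁, (R₁ * R₂) * x ^ (-2:ℝ) = h x := by
    intro x hx
    have hx0 : (0:ℝ) < x := hR₁.trans hx
    have hx2 : x ^ (-2:ℝ) = (x ^ 2)⁻¹ := by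
      rw [Real.rpow_neg hx0.le, ← Real.rpow_natCast x 2]; norm_num
    simp only [hh, not_le.2 (hR.trans_lt hx), if_false, not_le.2 (Set.mem_Ioi.1 hx), hx2, div_eq_mul_inv]
  have hint3 : IntegrableOn h (Set.Ioi R₁) := by
    have H : IntegrableOn (fun x : ℝ => (R₁ * R₂) * x ^ (-2:ℝ)) (Set.Ioi R₁) :=
      (integrableOn_Ioi_rpow_of_lt (by norm_num : (-2:ℝ) < -1) hR₁).const_mul (R₁ * R₂)
    exact H.congr_fun heq3 measurableSet_Ioi
  have hint23 : IntegrableOn h (Set.Ioc R₂ R₁ ∪ Set.Ioi R₁) := hint2.union hint3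
  have hIoiR₂ : Set.Ioi R₂ = Set.Ioc R₂ R₁ ∪ Set.Ioi R₁ := (Set.Ioc_union_Ioi_eq_Ioi hR).symm
  have hIoi0 : Set.Ioi (0:ℝ) = Set.Ioc 0 R₂ ∪ Set.Ioi R₂ :=
    (Set.Ioc_union_Ioi_eq_Ioi hR₂.le).symm
  have hinth : IntegrableOn h (Set.Ioi 0) := by
    rw [hIoi0, hIoiR₂]; exact hint1.union hint23
  -- pointwise bound
  have hbound : ∀ t ∈ Set.Ioi (0:ℝ), (μ {a | t < min (X a) (Y a)}).toReal ≤ h t := by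
    intro t ht
    rw [hprod t, ENNReal.toReal_mul]
    have hX1 : (μ {ω | t < X ω}).toReal ≤ 1 := by
      simpa using ENNReal.toReal_mono ENNReal.one_ne_top (prob_le_one (μ := μ))
    have hY1 : (μ {ω | t < Y ω}).toReal ≤ 1 := by
      simpa using ENNReal.toReal_mono ENNReal.one_ne_top (prob_le_one (μ := μ))
    have hXnn' : 0 ≤ (μ {ω | t < X ω}).toReal := ENNReal.toReal_nonneg
    have hYnn' : 0 ≤ (μ {ω | t < Y ω}).toReal := ENNReal.toReal_nonneg
    simp only [hh]
    split_ifs with h1 h2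
    · calc _ ≤ 1 * 1 := mul_le_mul hX1 hY1 hYnn' zero_le_one
        _ = 1 := by ring
    · calc _ ≤ 1 * (R₂ / t) := mul_le_mul hX1 (hY' t ht) hYnn' zero_le_one
        _ = R₂ / t := by ring
    · have ht' : (0:ℝ) < t := ht
      calc _ ≤ (R₁ / t) * (R₂ / t) :=
            mul_le_mul (hX' t ht') (hY' t ht') hYnn' (div_nonneg hR₁.le ht'.le)
        _ = R₁ * R₂ / t ^ 2 := by ring
  -- compare
  have hmono : ∫ t in Set.Ioi (0:ℝ), (μ {a | t < min (X a) (Y a)}).toReal ≤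
      ∫ t in Set.Ioi (0:ℝ), h t := by
    apply integral_mono_of_nonneg
    · exact Filter.Eventually.of_forall fun t => ENNReal.toReal_nonneg
    · exact hinth
    · filter_upwards [ae_restrict_mem measurableSet_Ioi] with t ht using hbound t ht
  refine hmono.trans ?_
  -- compute ∫ h
  have hdisj1 : Disjoint (Set.Ioc (0:ℝ) R₂) (Set.Ioi R₂) := by
    simp [Set.disjoint_left]
  have hdisj2 : Disjoint (Set.Ioc R₂ R₁) (Set.Ioi R₁) := by
    simp [Set.disjoint_left]
  have e1 : ∫ t in Set.Ioc (0:ℝ) R₂, h t = R₂ := by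
    rw [setIntegral_congr_fun measurableSet_Ioc (g := fun _ => (1:ℝ))
      (fun x hx => by simp [hh, hx.2])]
    simp [Real.volume_Ioc, hR₂.le]
  have e2 : ∫ t in Set.Ioc R₂ R₁, h t = R₂ * Real.log (R₁ / R₂) := by
    rw [setIntegral_congr_fun measurableSet_Ioc (g := fun t => R₂ * t⁻¹)
      (fun x hx => by simp only [hh, not_le.2 hx.1, if_false, hx.2, if_true, div_eq_mul_inv])]
    rw [← intervalIntegral.integral_of_le hR, intervalIntegral.integral_const_mul,
      integral_inv (by
        intro hmem
        rcases hmem with ⟨h1, h2⟩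
        simp only [inf_le_iff] at h1
        rcases h1 with h1 | h1 <;> linarith)]
  have e3 : ∫ t in Set.Ioi R₁, h t = R₂ := by
    rw [setIntegral_congr_fun measurableSet_Ioi (g := fun t => (R₁ * R₂) * t ^ (-2:ℝ))
      (fun x hx => (heq3 x hx).symm)]
    rw [MeasureTheory.integral_const_mul, integral_Ioi_rpow_of_lt (by norm_num) hR₁]
    have h1 : (-2:ℝ) + 1 = -1 := by norm_num
    rw [h1, Real.rpow_neg_one]
    field_simp
  rw [hIoi0, setIntegral_union hdisj1 measurableSet_Ioi hint1 (by rw [hIoiR₂]; exact hint23),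
    hIoiR₂, setIntegral_union hdisj2 measurableSet_Ioi hint2 hint3, e1, e2, e3]
  exact le_of_eq (by ring)
end

section
/- For real numbers 0 < u and 0 < R₂ ≤ R₁, the function g(u) = min{1, R₂/u, R₁R₂/u²} satisfies ∫₀^∞ g(u) du ≤ R₂(2 + ln(R₁/R₂)). -/
open MeasureTheory

theorem integral_min_bound (R₁ R₂ : ℝ) (hR₂ : 0 < R₂) (hR : R₂ ≤ R₁) :
    ∫ u in Set.Ioi (0 : ℝ), min 1 (min (R₂ / u) (R₁ * R₂ / u ^ 2))
      ≤ R₂ * (2 + Real.log (R₁ / R₂)) := by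
  have hR₁ : 0 < R₁ := hR₂.trans_le hR
  set g : ℝ → ℝ := fun u => min 1 (min (R₂ / u) (R₁ * R₂ / u ^ 2)) with hg
  have hmeas : Measurable g := by
    apply Measurable.min measurable_const
    exact (measurable_const.div measurable_id).min
      (measurable_const.div (measurable_id.pow_const 2))
  have hg_le_one : ∀ u, g u ≤ 1 := fun u => min_le_left _ _
  have hg_nonneg : ∀ u : ℝ, 0 < u → 0 ≤ g u := by
    intro u hu
    exact le_min zero_le_one (le_min (by positivity) (by positivity))
  -- integrability on the three pieces
  have bound1 : ∀ s : Set ℝ, MeasurableSet s → s ⊆ Set.Ioi 0 → volume s < ⊤ →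
      IntegrableOn g s := by
    intro s hs hsub hfin
    have hc : IntegrableOn (fun _ : ℝ => (1:ℝ)) s := integrableOn_const hfin.ne
    refine hc.mono' hmeas.aestronglyMeasurable ?_
    refine (ae_restrict_iff' hs).2 (Filter.Eventually.of_forall fun u hu => ?_)
    rw [Real.norm_eq_abs, abs_le]
    exact ⟨by linarith [hg_nonneg u (hsub hu)], hg_le_one u⟩
  have I1 : IntegrableOn g (Set.Ioc 0 R₂) :=
    bound1 _ measurableSet_Ioc Set.Ioc_subset_Ioi_self (by simp [Real.volume_Ioc])
  have I2 : IntegrableOn g (Set.Ioc R₂ R₁) :=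
    bound1 _ measurableSet_Ioc (fun u hu => hR₂.trans hu.1) (by simp [Real.volume_Ioc])
  have hrpow : ∀ u : ℝ, 0 < u → u ^ (-2 : ℝ) = (u ^ 2)⁻¹ := by
    intro u hu
    rw [show (-2 : ℝ) = -(2 : ℕ) by norm_num, Real.rpow_neg hu.le, Real.rpow_natCast]
  have Ibound : IntegrableOn (fun u : ℝ => R₁ * R₂ * u ^ (-2 : ℝ)) (Set.Ioi R₁) :=
    (integrableOn_Ioi_rpow_of_lt (by norm_num) hR₁).const_mul _
  have I3 : IntegrableOn g (Set.Ioi R₁) := by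
    refine Ibound.mono' hmeas.aestronglyMeasurable ?_
    refine (ae_restrict_iff' measurableSet_Ioi).2 (Filter.Eventually.of_forall fun u hu => ?_)
    have hu : R₁ < u := hu
    have hu0 : 0 < u := hR₁.trans hu
    rw [Real.norm_eq_abs, abs_of_nonneg (hg_nonneg u hu0), hrpow u hu0]
    calc g u ≤ R₁ * R₂ / u ^ 2 := (min_le_right _ _).trans (min_le_right _ _)
      _ = R₁ * R₂ * (u ^ 2)⁻¹ := by ring
  -- splitting
  have hsplit2 : Set.Ioc R₂ R₁ ∪ Set.Ioi R₁ = Set.Ioi R₂ := Set.Ioc_union_Ioi_eq_Ioi hR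
  have hsplit1 : Set.Ioc 0 R₂ ∪ Set.Ioi R₂ = Set.Ioi 0 := Set.Ioc_union_Ioi_eq_Ioi hR₂.le
  have I23 : IntegrableOn g (Set.Ioi R₂) := by rw [← hsplit2]; exact I2.union I3
  have split1 : ∫ u in Set.Ioi (0:ℝ), g u
      = (∫ u in Set.Ioc 0 R₂, g u) + ∫ u in Set.Ioi R₂, g u := by
    rw [← hsplit1]
    exact setIntegral_union (Set.Ioc_disjoint_Ioi le_rfl) measurableSet_Ioi I1 I23
  have split2 : ∫ u in Set.Ioi R₂, g u
      = (∫ u in Set.Ioc R₂ R₁, g u) + ∫ u in Set.Ioi R₁, g u := by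
    rw [← hsplit2]
    exact setIntegral_union (Set.Ioc_disjoint_Ioi le_rfl) measurableSet_Ioi I2 I3
  -- piece 1
  have p1 : ∫ u in Set.Ioc 0 R₂, g u ≤ R₂ := by
    calc ∫ u in Set.Ioc 0 R₂, g u ≤ ∫ _u in Set.Ioc 0 R₂, (1:ℝ) :=
          setIntegral_mono_on I1 (integrableOn_const (by simp [Real.volume_Ioc]))
            measurableSet_Ioc (fun u _ => hg_le_one u)
      _ = R₂ := by simp [Real.volume_Ioc, hR₂.le]
  -- piece 2
  have Ihyp : IntegrableOn (fun u : ℝ => R₂ / u) (Set.Ioc R₂ R₁) := by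
    refine ((continuousOn_const.div continuousOn_id ?_).integrableOn_Icc).mono_set
      Set.Ioc_subset_Icc_self
    intro u hu; exact (hR₂.trans_le hu.1).ne'
  have p2 : ∫ u in Set.Ioc R₂ R₁, g u ≤ R₂ * Real.log (R₁ / R₂) := by
    have hval : ∫ u in Set.Ioc R₂ R₁, R₂ / u = R₂ * Real.log (R₁ / R₂) := by
      rw [← intervalIntegral.integral_of_le hR]
      have : ∀ u : ℝ, R₂ / u = R₂ * (1 / u) := fun u => by ring
      simp_rw [this]
      rw [intervalIntegral.integral_const_mul, integral_one_div]
      intro h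
      rcases Set.mem_uIcc.1 h with h | h <;> linarith [h.1, h.2]
    calc ∫ u in Set.Ioc R₂ R₁, g u ≤ ∫ u in Set.Ioc R₂ R₁, R₂ / u :=
          setIntegral_mono_on I2 Ihyp measurableSet_Ioc
            (fun u _ => (min_le_right _ _).trans (min_le_left _ _))
      _ = R₂ * Real.log (R₁ / R₂) := hval
  -- piece 3
  have p3 : ∫ u in Set.Ioi R₁, g u ≤ R₂ := by
    have hval : ∫ u in Set.Ioi R₁, R₁ * R₂ * u ^ (-2 : ℝ) = R₂ := by
      rw [MeasureTheory.integral_const_mul, integral_Ioi_rpow_of_lt (by norm_num) hR₁]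
      rw [show (-2 : ℝ) + 1 = -1 by norm_num, Real.rpow_neg_one]
      field_simp
    calc ∫ u in Set.Ioi R₁, g u ≤ ∫ u in Set.Ioi R₁, R₁ * R₂ * u ^ (-2 : ℝ) := by
          refine setIntegral_mono_on I3 Ibound measurableSet_Ioi fun u hu => ?_
          have hu0 : 0 < u := hR₁.trans hu
          rw [hrpow u hu0]
          calc g u ≤ R₁ * R₂ / u ^ 2 := (min_le_right _ _).trans (min_le_right _ _)
            _ = R₁ * R₂ * (u ^ 2)⁻¹ := by ring
      _ = R₂ := hval
  calc ∫ u in Set.Ioi (0:ℝ), g u = _ := by rw [split1, split2]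
    _ ≤ R₂ + (R₂ * Real.log (R₁ / R₂) + R₂) := by gcongr
    _ ≤ R₂ * (2 + Real.log (R₁ / R₂)) := by ring_nf; linarith
end

section
/- Let X, Y be independent nonnegative random variables and suppose R₁, R₂ > 0 satisfy u·P(X>u) ≤ R₁ and u·P(Y>u) ≤ R₂ for all u > 0, with R₁ ≥ R₂. Then for any quantity S satisfying S ≤ R₁ + R₂ + E[min{X,Y}], we have S ≤ R₁ + (3 + ln(R₁/R₂))·R₂. -/
open MeasureTheory

theorem revenue_additive_bound
    {Ω : Type*} [MeasurableSpace Ω] (μ : Measure Ω) [IsProbabilityMeasure μ]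
    (X Y : Ω → ℝ) (hX : Measurable X) (hY : Measurable Y)
    (hXnn : ∀ ω, 0 ≤ X ω) (hYnn : ∀ ω, 0 ≤ Y ω)
    (hindep : ProbabilityTheory.IndepFun X Y μ)
    (hint : Integrable (fun ω => min (X ω) (Y ω)) μ)
    (R₁ R₂ : ℝ) (hR₂ : 0 < R₂) (hR : R₂ ≤ R₁)
    (hX' : ∀ u : ℝ, 0 < u → u * (μ {ω | u < X ω}).toReal ≤ R₁)
    (hY' : ∀ u : ℝ, 0 < u → u * (μ {ω | u < Y ω}).toReal ≤ R₂)
    (S : ℝ) (hS : S ≤ R₁ + R₂ + ∫ ω, min (X ω) (Y ω) ∂μ) :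
    S ≤ R₁ + (3 + Real.log (R₁ / R₂)) * R₂ := by
  have hR₁ : 0 < R₁ := lt_of_lt_of_le hR₂ hR
  set f : Ω → ℝ := fun ω => min (X ω) (Y ω) with hf
  have fnn : 0 ≤ᵐ[μ] f := Filter.Eventually.of_forall fun ω => le_min (hXnn ω) (hYnn ω)
  have key := hint.integral_eq_integral_meas_lt fnn
  set g : ℝ → ℝ := fun t => (μ {a | t < f a}).toReal with hg
  set h : ℝ → ℝ := fun t => if t ≤ R₂ then 1 else if t ≤ R₁ then R₂ / t else R₁ * R₂ / t ^ 2
    with hhdef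
  -- Integrability on the three pieces
  have hpow : ∀ t : ℝ, 0 < t → t ^ (-2 : ℝ) = (t ^ 2)⁻¹ := by
    intro t ht0
    rw [Real.rpow_neg ht0.le, ← Real.rpow_natCast t 2]
    norm_num
  have e1 : Set.EqOn (fun _ : ℝ => (1 : ℝ)) h (Set.Ioc 0 R₂) := fun t ht => by
    simp [hhdef, ht.2]
  have hI1 : IntegrableOn h (Set.Ioc 0 R₂) :=
    ((integrableOn_const_iff (C := (1 : ℝ))).mpr (Or.inr measure_Ioc_lt_top)).congr_fun e1 measurableSet_Ioc
  have hI2 : IntegrableOn h (Set.Ioc R₂ R₁) := by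
    have hc : IntegrableOn (fun t : ℝ => R₂ / t) (Set.Icc R₂ R₁) := by
      apply ContinuousOn.integrableOn_Icc
      exact continuousOn_const.div continuousOn_id
        (fun t ht => ne_of_gt (lt_of_lt_of_le hR₂ ht.1))
    have e2 : Set.EqOn (fun t : ℝ => R₂ / t) h (Set.Ioc R₂ R₁) := fun t ht => by
      simp [hhdef, not_le.mpr ht.1, ht.2]
    exact (hc.mono_set Set.Ioc_subset_Icc_self).congr_fun e2 measurableSet_Ioc
  have hI3 : IntegrableOn h (Set.Ioi R₁) := by
    have hc : IntegrableOn (fun t : ℝ => R₁ * R₂ * t ^ (-2 : ℝ)) (Set.Ioi R₁) :=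
      (integrableOn_Ioi_rpow_of_lt (by norm_num) hR₁).const_mul _
    have e3 : Set.EqOn (fun t : ℝ => R₁ * R₂ * t ^ (-2 : ℝ)) h (Set.Ioi R₁) := fun t ht => by
      have ht1 : R₁ < t := ht
      have ht0 : 0 < t := lt_trans hR₁ ht1
      simp only [hhdef, not_le.mpr ht1, not_le.mpr (lt_of_le_of_lt hR ht1), if_false,
        hpow t ht0]
      ring
    exact hc.congr_fun e3 measurableSet_Ioi
  have hIoc : IntegrableOn h (Set.Ioc 0 R₁) := by
    rw [← Set.Ioc_union_Ioc_eq_Ioc hR₂.le hR]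
    exact hI1.union hI2
  have hIh : IntegrableOn h (Set.Ioi 0) := by
    rw [← Set.Ioc_union_Ioi_eq_Ioi hR₁.le]
    exact hIoc.union hI3
  -- pointwise bound g ≤ h on Ioi 0
  have hgh : ∀ t : ℝ, 0 < t → g t ≤ h t := by
    intro t ht
    have hset : {a | t < f a} = X ⁻¹' Set.Ioi t ∩ Y ⁻¹' Set.Ioi t := by
      ext ω
      simp only [hf, Set.mem_setOf_eq, lt_min_iff, lt_inf_iff, Set.mem_inter_iff,
        Set.mem_preimage, Set.mem_Ioi]
    have hfin : ∀ s : Set Ω, (μ s) ≠ ⊤ := fun s => measure_ne_top μ s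
    have hXb : (μ (X ⁻¹' Set.Ioi t)).toReal ≤ R₁ / t := by
      rw [le_div_iff₀ ht, mul_comm]
      exact hX' t ht
    have hYb : (μ (Y ⁻¹' Set.Ioi t)).toReal ≤ R₂ / t := by
      rw [le_div_iff₀ ht, mul_comm]
      exact hY' t ht
    have hone : ∀ s : Set Ω, (μ s).toReal ≤ 1 := fun s => by
      simpa using ENNReal.toReal_mono ENNReal.one_ne_top prob_le_one
    by_cases h1 : t ≤ R₂
    · simp only [hhdef, h1, if_true, hg]
      exact hone _
    · by_cases h2 : t ≤ R₁
      · simp only [hhdef, h1, h2, if_true, if_false, hg, hset]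
        calc (μ (X ⁻¹' Set.Ioi t ∩ Y ⁻¹' Set.Ioi t)).toReal
            ≤ (μ (Y ⁻¹' Set.Ioi t)).toReal :=
              ENNReal.toReal_mono (hfin _) (measure_mono Set.inter_subset_right)
          _ ≤ R₂ / t := hYb
      · simp only [hhdef, h1, h2, if_false, hg, hset]
        rw [hindep.measure_inter_preimage_eq_mul _ _ measurableSet_Ioi measurableSet_Ioi,
          ENNReal.toReal_mul]
        calc (μ (X ⁻¹' Set.Ioi t)).toReal * (μ (Y ⁻¹' Set.Ioi t)).toReal
            ≤ (R₁ / t) * (R₂ / t) :=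
              mul_le_mul hXb hYb ENNReal.toReal_nonneg (by positivity)
          _ = R₁ * R₂ / t ^ 2 := by ring
  -- the integral comparison
  have hmono : ∫ t in Set.Ioi 0, g t ≤ ∫ t in Set.Ioi 0, h t := by
    apply integral_mono_of_nonneg
    · exact Filter.Eventually.of_forall fun t => ENNReal.toReal_nonneg
    · exact hIh
    · exact (ae_restrict_iff' measurableSet_Ioi).mpr
        (Filter.Eventually.of_forall fun t ht => hgh t ht)
  -- compute the three integrals
  have hJ1 : ∫ t in Set.Ioc 0 R₂, h t = R₂ := by
    rw [setIntegral_congr_fun measurableSet_Ioc (g := fun _ => (1 : ℝ))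
      (fun t ht => by simp [hhdef, ht.2])]
    simp [Real.volume_Ioc, hR₂.le]
  have hJ2 : ∫ t in Set.Ioc R₂ R₁, h t = R₂ * Real.log (R₁ / R₂) := by
    rw [setIntegral_congr_fun measurableSet_Ioc (g := fun t => R₂ * (1 / t))
      (fun t ht => by simp [hhdef, not_le.mpr ht.1, ht.2]; ring)]
    rw [← intervalIntegral.integral_of_le hR, intervalIntegral.integral_const_mul,
      integral_one_div]
    rw [Set.uIcc_of_le hR]
    intro h0
    exact absurd h0.1 (not_le.mpr hR₂)
  have hJ3 : ∫ t in Set.Ioi R₁, h t = R₂ := by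
    rw [setIntegral_congr_fun measurableSet_Ioi (g := fun t => R₁ * R₂ * t ^ (-2 : ℝ))
      (fun t ht => by
        have ht1 : R₁ < t := ht
        have ht0 : 0 < t := lt_trans hR₁ ht1
        simp only [hhdef, not_le.mpr ht1, not_le.mpr (lt_of_le_of_lt hR ht1), if_false,
          hpow t ht0]
        ring)]
    rw [integral_const_mul, integral_Ioi_rpow_of_lt (by norm_num) hR₁]
    rw [show (-2 : ℝ) + 1 = -1 by norm_num, Real.rpow_neg_one]
    field_simp
  have hsplit : ∫ t in Set.Ioi 0, h t = R₂ + R₂ * Real.log (R₁ / R₂) + R₂ := by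
    rw [← Set.Ioc_union_Ioi_eq_Ioi hR₁.le,
      setIntegral_union (Set.Ioc_disjoint_Ioi le_rfl) measurableSet_Ioi hIoc hI3,
      ← Set.Ioc_union_Ioc_eq_Ioc hR₂.le hR,
      setIntegral_union (Set.Ioc_disjoint_Ioc.mpr (inf_le_left.trans le_sup_right)) measurableSet_Ioc hI1 hI2,
      hJ1, hJ2, hJ3]
  have hfinal : ∫ ω, f ω ∂μ ≤ (2 + Real.log (R₁ / R₂)) * R₂ := by
    rw [key]
    calc ∫ t in Set.Ioi 0, g t ≤ ∫ t in Set.Ioi 0, h t := hmono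
      _ = R₂ + R₂ * Real.log (R₁ / R₂) + R₂ := hsplit
      _ = (2 + Real.log (R₁ / R₂)) * R₂ := by ring
  calc S ≤ R₁ + R₂ + ∫ ω, f ω ∂μ := hS
    _ ≤ R₁ + R₂ + (2 + Real.log (R₁ / R₂)) * R₂ := by linarith
    _ = R₁ + (3 + Real.log (R₁ / R₂)) * R₂ := by ring
end
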